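/- If two events e₁ < e₂ of a branching process of A, neither of them an interface event, satisfy M(e₁)ᵢ = M(e₂)ᵢ (same i-predecessor condition) and st(e₁) = st(e₂) (same reached global state), then A has an infinite trace whose projection onto Σᵢ is finite; that is, A is divergent. -/

import Mathlib

open Sum

/-- Nodes `x` and `y` of an occurrence net are in conflict if some condition
can reach both along paths exiting it by different arcs (arcs out of a
condition lead to events). -/
def bpConflict {C E : Type} (F : C ⊕ E → C ⊕ E → Prop) (x y : C ⊕ E) : Prop :=
  ∃ (c : C) (e₁ e₂ : E), e₁ ≠ e₂ ∧ F (inl c) (inr e₁) ∧ F (inl c) (inr e₂) ∧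
    Relation.ReflTransGen F (inr e₁) x ∧ Relation.ReflTransGen F (inr e₂) y

/-- Nodes are concurrent if they are neither causally related nor in conflict. -/
def bpConcurrent {C E : Type} (F : C ⊕ E → C ⊕ E → Prop) (x y : C ⊕ E) : Prop :=
  ¬ Relation.ReflTransGen F x y ∧ ¬ Relation.ReflTransGen F y x ∧ ¬ bpConflict F x y

/-- The past `[e]` of an event: all events `e' ≤ e`. -/
def bpPast {C E : Type} (F : C ⊕ E → C ⊕ E → Prop) (e : E) : Set E :=
  {e' | Relation.ReflTransGen F (inr e') (inr e)}

/-- A condition is initial if it has no input event. -/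
def bpInitial {C E : Type} (F : C ⊕ E → C ⊕ E → Prop) (c : C) : Prop :=
  ¬ ∃ e : E, F (inr e) (inl c)

/-- The cut `M(e)`: conditions produced by (or initial and untouched by) the
past of `e` and not consumed by it. -/
def bpCut {C E : Type} (F : C ⊕ E → C ⊕ E → Prop) (e : E) : Set C :=
  {c | (bpInitial F c ∨ ∃ e' ∈ bpPast F e, F (inr e') (inl c)) ∧
       ∀ e'' ∈ bpPast F e, ¬ F (inl c) (inr e'')}

/-- `e'` is a strong cause of `e` (`e' ≪ e`): `e' < e` and `b' < b` for every
`b ∈ M(e) \ M(e')` and `b' ∈ M(e') \ M(e)`. -/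
def bpSCause {C E : Type} (F : C ⊕ E → C ⊕ E → Prop) (e' e : E) : Prop :=
  Relation.TransGen F (inr e') (inr e) ∧
  ∀ b ∈ bpCut F e, b ∉ bpCut F e' → ∀ b' ∈ bpCut F e', b' ∉ bpCut F e →
    Relation.TransGen F (inl b') (inl b)

/-- A branching process of a parallel composition of LTSs indexed by `ι`:
an occurrence net whose conditions are labelled with components (`comp`),
with one condition per component in the initial cut, and where every event
consumes and produces exactly one condition per participating component. -/
structure BProc (ι C E : Type) where
  F : C ⊕ E → C ⊕ E → Prop
  comp : C → ι
  flow_cc : ∀ c c' : C, ¬ F (inl c) (inl c')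
  flow_ee : ∀ e e' : E, ¬ F (inr e) (inr e')
  cond_pre_unique : ∀ (c : C) (e e' : E), F (inr e) (inl c) → F (inr e') (inl c) → e = e'
  acyclic : ∀ x : C ⊕ E, ¬ Relation.TransGen F x x
  past_finite : ∀ e : E, (bpPast F e).Finite
  pre_nonempty : ∀ e : E, ∃ c : C, F (inl c) (inr e)
  no_self_conflict : ∀ e : E, ¬ bpConflict F (inr e) (inr e)
  pre_comp_inj : ∀ (e : E) (c c' : C),
    F (inl c) (inr e) → F (inl c') (inr e) → comp c = comp c' → c = c'
  post_comp_inj : ∀ (e : E) (c c' : C),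
    F (inr e) (inl c) → F (inr e) (inl c') → comp c = comp c' → c = c'
  pre_post_comp : ∀ (e : E) (c : C),
    F (inl c) (inr e) → ∃ c', F (inr e) (inl c') ∧ comp c' = comp c
  post_pre_comp : ∀ (e : E) (c : C),
    F (inr e) (inl c) → ∃ c', F (inl c') (inr e) ∧ comp c' = comp c
  init_unique : ∀ c c' : C, bpInitial F c → bpInitial F c' → comp c = comp c' → c = c'
  init_exists : ∀ i : ι, ∃ c : C, comp c = i ∧ bpInitial F c

structure LTS (α S : Type) where
  init : S
  step : S → α → S → Prop

def parStep {α ι T : Type} (alph : ι → α → Bool) (A : ι → LTS α T) :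
    (ι → T) → α → (ι → T) → Prop := fun s a s' =>
  ∀ i, (alph i a = true → (A i).step (s i) a (s' i)) ∧ (alph i a = false → s' i = s i)

/-- A branching process of the parallel composition of the LTSs `A j` (with
alphabets `alph j`), with events labelled by actions (`act`) and conditions
labelled by component states (`stc`), together with the selection `Mi e j` of
the unique condition of component `j` in the cut `M(e)`. -/
structure LBProc (ι C E α T : Type) (alph : ι → α → Bool) (A : ι → LTS α T)
    extends BProc ι C E where
  act : E → α
  stc : C → T
  participates_iff : ∀ (e : E) (j : ι),
    alph j (act e) = true ↔ ∃ c, F (inl c) (inr e) ∧ comp c = j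
  step_comp : ∀ (e : E) (c c' : C), F (inl c) (inr e) → F (inr e) (inl c') →
    comp c = comp c' → (A (comp c)).step (stc c) (act e) (stc c')
  init_state : ∀ c : C, bpInitial F c → stc c = (A (comp c)).init
  Mi : E → ι → C
  Mi_mem : ∀ (e : E) (j : ι), Mi e j ∈ bpCut F e
  Mi_comp : ∀ (e : E) (j : ι), comp (Mi e j) = j


lemma exists_min_aux {E : Type} (r : E → E → Prop) (htrans : Transitive r)
    (hirr : ∀ a, ¬ r a a) :
    ∀ n (s : Finset E), s.card = n → s.Nonempty → ∃ a ∈ s, ∀ b ∈ s, ¬ r b a := by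
  classical
  intro n
  induction n using Nat.strong_induction_on with
  | _ n ih =>
    intro s hcard hne
    obtain ⟨a, ha⟩ := hne
    set t := s.filter (fun b => r b a) with ht
    by_cases hte : t.Nonempty
    · have hat : a ∉ t := by simp [ht, hirr a]
      have htcard : t.card < n := by
        rw [← hcard]
        exact Finset.card_lt_card (Finset.ssubset_iff_of_subset (Finset.filter_subset _ _) |>.mpr ⟨a, ha, hat⟩)
      obtain ⟨b, hbt, hbmin⟩ := ih t.card htcard t rfl hte
      refine ⟨b, (Finset.mem_filter.mp hbt).1, fun c hc hrcb => ?_⟩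
      have hrba : r b a := (Finset.mem_filter.mp hbt).2
      exact hbmin c (Finset.mem_filter.mpr ⟨hc, htrans hrcb hrba⟩) hrcb
    · refine ⟨a, ha, fun b hb hrba => ?_⟩
      exact hte ⟨b, Finset.mem_filter.mpr ⟨hb, hrba⟩⟩

lemma exists_topo_finset {E : Type} (r : E → E → Prop) (htrans : Transitive r)
    (hirr : ∀ a, ¬ r a a) :
    ∀ n (s : Finset E), s.card = n →
      ∃ L : List E, L.Nodup ∧ (∀ x, x ∈ L ↔ x ∈ s) ∧ L.Pairwise (fun a b => ¬ r b a) := by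
  classical
  intro n
  induction n using Nat.strong_induction_on with
  | _ n ih =>
    intro s hcard
    rcases s.eq_empty_or_nonempty with rfl | hne
    · exact ⟨[], by simp, by simp, by simp⟩
    · obtain ⟨a, ha, hmin⟩ := exists_min_aux r htrans hirr n s hcard hne
      have hlt : (s.erase a).card < n := by
        rw [← hcard]; exact Finset.card_erase_lt_of_mem ha
      obtain ⟨L, hnd, hmem, hpw⟩ := ih _ hlt (s.erase a) rfl
      refine ⟨a :: L, ?_, ?_, ?_⟩
      · simp only [List.nodup_cons]
        exact ⟨fun h => (Finset.notMem_erase a s) ((hmem a).mp h), hnd⟩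
      · intro x
        simp only [List.mem_cons, hmem, Finset.mem_erase]
        constructor
        · rintro (rfl | ⟨_, h⟩) <;> [exact ha; exact h]
        · intro hx
          by_cases hxa : x = a
          · exact Or.inl hxa
          · exact Or.inr ⟨hxa, hx⟩
      · refine List.pairwise_cons.mpr ⟨fun b hb => ?_, hpw⟩
        exact hmin b (Finset.mem_erase.mp ((hmem b).mp hb)).2

lemma exists_topo {E : Type} (r : E → E → Prop) (htrans : Transitive r)
    (hirr : ∀ a, ¬ r a a) (S : Set E) (hS : S.Finite) :
    ∃ L : List E, L.Nodup ∧ (∀ x, x ∈ L ↔ x ∈ S) ∧ L.Pairwise (fun a b => ¬ r b a) := by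
  obtain ⟨L, hnd, hmem, hpw⟩ := exists_topo_finset r htrans hirr hS.toFinset.card hS.toFinset rfl
  exact ⟨L, hnd, fun x => (hmem x).trans (Set.Finite.mem_toFinset hS), hpw⟩

section Aux

variable {ι C E α T : Type} {alph : ι → α → Bool} {A : ι → LTS α T}
variable (N : LBProc ι C E α T alph A)

noncomputable def initC (j : ι) : C := (N.init_exists j).choose

lemma initC_comp (j : ι) : N.comp (initC N j) = j := (N.init_exists j).choose_spec.1
lemma initC_init (j : ι) : bpInitial N.F (initC N j) := (N.init_exists j).choose_spec.2

noncomputable def preC (e : E) (j : ι) (h : alph j (N.act e) = true) : C :=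
  ((N.participates_iff e j).mp h).choose

lemma preC_flow (e : E) (j : ι) (h : alph j (N.act e) = true) :
    N.F (inl (preC N e j h)) (inr e) := ((N.participates_iff e j).mp h).choose_spec.1
lemma preC_comp (e : E) (j : ι) (h : alph j (N.act e) = true) :
    N.comp (preC N e j h) = j := ((N.participates_iff e j).mp h).choose_spec.2

noncomputable def postC (e : E) (j : ι) (h : alph j (N.act e) = true) : C :=
  (N.pre_post_comp e (preC N e j h) (preC_flow N e j h)).choose

lemma postC_flow (e : E) (j : ι) (h : alph j (N.act e) = true) :
    N.F (inr e) (inl (postC N e j h)) :=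
  (N.pre_post_comp e (preC N e j h) (preC_flow N e j h)).choose_spec.1
lemma postC_comp (e : E) (j : ι) (h : alph j (N.act e) = true) :
    N.comp (postC N e j h) = j := by
  unfold postC
  rw [(N.pre_post_comp e (preC N e j h) (preC_flow N e j h)).choose_spec.2]
  exact preC_comp N e j h

noncomputable def curr (L : List E) : ℕ → ι → C
  | 0, j => initC N j
  | (k+1), j =>
    if hk : k < L.length then
      if h : alph j (N.act (L.get ⟨k, hk⟩)) = true then postC N (L.get ⟨k, hk⟩) j h
      else curr L k j
    else curr L k j



variable (e₂ : E) (L : List E)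

/-- The invariant: after executing the first `k` events of `L`, for each
component `j`, `curr N L k j` is the unique current condition of component `j`. -/
def InvP (k : ℕ) : Prop := ∀ j : ι,
  N.comp (curr N L k j) = j ∧
  (bpInitial N.F (curr N L k j) ∨ ∃ e ∈ L.take k, N.F (inr e) (inl (curr N L k j))) ∧
  (∀ e ∈ L.take k, ¬ N.F (inl (curr N L k j)) (inr e)) ∧
  (∀ d, N.comp d = j → (bpInitial N.F d ∨ ∃ e ∈ L.take k, N.F (inr e) (inl d)) →
    (∀ e ∈ L.take k, ¬ N.F (inl d) (inr e)) → d = curr N L k j)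

lemma consume_unique (c : C) (a b : E) (ha : a ∈ bpPast N.F e₂) (hb : b ∈ bpPast N.F e₂)
    (hfa : N.F (inl c) (inr a)) (hfb : N.F (inl c) (inr b)) : a = b := by
  by_contra hne
  exact N.no_self_conflict e₂ ⟨c, a, b, hne, hfa, hfb, ha, hb⟩

lemma lt_irrefl' (a : C ⊕ E) : ¬ Relation.TransGen N.F a a := N.acyclic a

lemma mem_take_of_lt (hnd : L.Nodup) (hpw : L.Pairwise
      (fun a b => ¬ Relation.TransGen N.F (inr b) (inr a)))
    {k : ℕ} (hk : k < L.length) {a : E}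
    (hab : Relation.TransGen N.F (inr a) (inr (L.get ⟨k, hk⟩)))
    (ha : a ∈ L) : a ∈ L.take k := by
  set e := L.get ⟨k, hk⟩ with he
  have hsplit : L.take (k+1) = L.take k ++ [e] := by
    rw [he]; simpa [List.concat_eq_append] using (List.take_concat_get L k hk).symm
  have hL2 : L = L.take (k+1) ++ L.drop (k+1) := (List.take_append_drop _ _).symm
  have hmem : a ∈ L.take (k+1) ∨ a ∈ L.drop (k+1) := by
    rw [hL2] at ha; exact List.mem_append.mp ha
  rcases hmem with h1 | h2
  · rw [hsplit] at h1
    rcases List.mem_append.mp h1 with h | h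
    · exact h
    · exfalso
      have : a = e := List.mem_singleton.mp h
      exact N.acyclic _ (this ▸ hab)
  · exfalso
    have hpw' : ∀ x ∈ L.take (k+1), ∀ y ∈ L.drop (k+1),
        ¬ Relation.TransGen N.F (inr y) (inr x) := by
      have := hL2 ▸ hpw
      exact fun x hx y hy => (List.pairwise_append.mp this).2.2 x hx y hy
    have hein : e ∈ L.take (k+1) := by rw [hsplit]; simp
    exact hpw' e hein a h2 hab

lemma not_mem_take_self (hnd : L.Nodup) {k : ℕ} (hk : k < L.length) :
    L.get ⟨k, hk⟩ ∉ L.take k := by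
  intro hmem
  have hsplit : L.take (k+1) = L.take k ++ [L.get ⟨k, hk⟩] :=
    by simpa [List.concat_eq_append] using (List.take_concat_get L k hk).symm
  have hnd' : (L.take (k+1)).Nodup := (List.take_sublist _ _).nodup hnd
  rw [hsplit] at hnd'
  exact (List.disjoint_of_nodup_append hnd') hmem (by simp)

lemma take_subset_past (hL : ∀ x, x ∈ L ↔ x ∈ bpPast N.F e₂) {k : ℕ} :
    ∀ x ∈ L.take k, x ∈ bpPast N.F e₂ :=
  fun x hx => (hL x).mp ((L.take_sublist k).mem hx)

lemma key_pre (hnd : L.Nodup)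
    (hpw : L.Pairwise (fun a b => ¬ Relation.TransGen N.F (inr b) (inr a)))
    (hL : ∀ x, x ∈ L ↔ x ∈ bpPast N.F e₂)
    {k : ℕ} (hk : k < L.length) (hInv : InvP N L k) (j : ι)
    (h : alph j (N.act (L.get ⟨k, hk⟩)) = true) :
    preC N (L.get ⟨k, hk⟩) j h = curr N L k j := by
  classical
  set e := L.get ⟨k, hk⟩ with he
  set c := preC N e j h with hc
  have hcf : N.F (inl c) (inr e) := preC_flow N e j h
  have hepast : e ∈ bpPast N.F e₂ := (hL e).mp (by rw [he]; exact List.get_mem L ⟨k, hk⟩)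
  -- c is initial or produced by an event in the prefix
  have hprod : bpInitial N.F c ∨ ∃ e' ∈ L.take k, N.F (inr e') (inl c) := by
    by_cases hini : bpInitial N.F c
    · exact Or.inl hini
    · right
      obtain ⟨e', he'⟩ := not_not.mp hini
      refine ⟨e', ?_, he'⟩
      have hlt : Relation.TransGen N.F (inr e') (inr e) :=
        Relation.TransGen.head he' (Relation.TransGen.single hcf)
      have he'L : e' ∈ L := (hL e').mpr
        (Relation.ReflTransGen.trans hlt.to_reflTransGen hepast)
      exact mem_take_of_lt N L hnd hpw hk hlt he'L
  -- c is not consumed by the prefix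
  have hnocons : ∀ e'' ∈ L.take k, ¬ N.F (inl c) (inr e'') := by
    intro e'' he'' hf
    have heq : e'' = e := consume_unique N e₂ c e'' e
      (take_subset_past N e₂ L hL e'' he'') hepast hf hcf
    rw [heq, he] at he''
    exact not_mem_take_self L hnd hk he''
  exact (hInv j).2.2.2 c (preC_comp N e j h) hprod hnocons

lemma curr_zero (j : ι) : curr N L 0 j = initC N j := rfl

lemma curr_succ (k : ℕ) (j : ι) : curr N L (k+1) j =
    if hk : k < L.length then
      if h : alph j (N.act (L.get ⟨k, hk⟩)) = true then postC N (L.get ⟨k, hk⟩) j h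
      else curr N L k j
    else curr N L k j := rfl

lemma invZero : InvP N L 0 := by
  intro j
  refine ⟨?_, ?_, by simp, ?_⟩
  · rw [curr_zero]; exact initC_comp N j
  · rw [curr_zero]; exact Or.inl (initC_init N j)
  · intro d hdc hdp _
    rw [curr_zero]
    rcases hdp with hdi | ⟨e, he, _⟩
    · exact N.init_unique d _ hdi (initC_init N j) (by rw [hdc, initC_comp])
    · simp at he

lemma inv_succ (hnd : L.Nodup)
    (hpw : L.Pairwise (fun a b => ¬ Relation.TransGen N.F (inr b) (inr a)))
    (hL : ∀ x, x ∈ L ↔ x ∈ bpPast N.F e₂)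
    {k : ℕ} (hk : k < L.length) (hInv : InvP N L k) : InvP N L (k+1) := by
  classical
  intro j
  set e := L.get ⟨k, hk⟩ with he
  have hsplit : L.take (k+1) = L.take k ++ [e] := by
    rw [he]; simpa [List.concat_eq_append] using (List.take_concat_get L k hk).symm
  have hmem_take : ∀ x, x ∈ L.take (k+1) ↔ x ∈ L.take k ∨ x = e := by
    intro x; rw [hsplit]; simp
  have hepast : e ∈ bpPast N.F e₂ := (hL e).mp (by rw [he]; exact List.get_mem L ⟨k, hk⟩)
  by_cases h : alph j (N.act e) = true
  · -- j participates in e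
    have hcurr : curr N L (k+1) j = postC N e j h := by
      rw [curr_succ, dif_pos hk, dif_pos h]
    have hpre : preC N e j h = curr N L k j := key_pre N e₂ L hnd hpw hL hk hInv j h
    rw [hcurr]
    refine ⟨postC_comp N e j h, ?_, ?_, ?_⟩
    · exact Or.inr ⟨e, (hmem_take e).mpr (Or.inr rfl), postC_flow N e j h⟩
    · intro e'' he'' hf
      rcases (hmem_take e'').mp he'' with h1 | rfl
      · -- e'' in old prefix consuming post of e : gives e < e'' contradiction with order
        have hlt : Relation.TransGen N.F (inr e) (inr e'') :=
          Relation.TransGen.head (postC_flow N e j h) (Relation.TransGen.single hf)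
        -- e'' before e in L but e < e''
        have : e'' ∈ L.take k := h1
        -- use pairwise: e'' ∈ take k, e = L[k] ∈ drop k head: ¬ lt e e''
        have hL2 : L = L.take k ++ L.drop k := (List.take_append_drop _ _).symm
        have hdrop : L.drop k = e :: L.drop (k+1) := by
          rw [he]; exact (List.drop_eq_getElem_cons hk)
        have hpw' := hL2 ▸ hpw
        have := (List.pairwise_append.mp hpw').2.2 e'' this e (by rw [hdrop]; simp)
        exact this hlt
      · exact N.acyclic (inr e)
          (Relation.TransGen.head (postC_flow N e j h) (Relation.TransGen.single hf))
    · intro d hdc hdp hdnc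
      rcases hdp with hdi | ⟨e', he', hf'⟩
      · -- d initial: then d satisfies old invariant hyps, d = curr k j = preC, but preC consumed by e
        exfalso
        have : d = curr N L k j := (hInv j).2.2.2 d hdc (Or.inl hdi)
          (fun x hx => hdnc x ((hmem_take x).mpr (Or.inl hx)))
        apply hdnc e ((hmem_take e).mpr (Or.inr rfl))
        rw [this, ← hpre]; exact preC_flow N e j h
      · rcases (hmem_take e').mp he' with h1 | rfl
        · exfalso
          have : d = curr N L k j := (hInv j).2.2.2 d hdc (Or.inr ⟨e', h1, hf'⟩)
            (fun x hx => hdnc x ((hmem_take x).mpr (Or.inl hx)))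
          apply hdnc e ((hmem_take e).mpr (Or.inr rfl))
          rw [this, ← hpre]; exact preC_flow N e j h
        · exact N.post_comp_inj e d _ hf' (postC_flow N e j h)
            (by rw [hdc, postC_comp])
  · -- j does not participate
    have hcurr : curr N L (k+1) j = curr N L k j := by
      rw [curr_succ, dif_pos hk, dif_neg h]
    rw [hcurr]
    obtain ⟨hc1, hc2, hc3, hc4⟩ := hInv j
    refine ⟨hc1, ?_, ?_, ?_⟩
    · rcases hc2 with h1 | ⟨e', he', hf'⟩
      · exact Or.inl h1
      · exact Or.inr ⟨e', (hmem_take e').mpr (Or.inl he'), hf'⟩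
    · intro e'' he'' hf
      rcases (hmem_take e'').mp he'' with h1 | rfl
      · exact hc3 e'' h1 hf
      · exact h ((N.participates_iff e j).mpr ⟨curr N L k j, hf, hc1⟩)
    · intro d hdc hdp hdnc
      have hdnc' : ∀ x ∈ L.take k, ¬ N.F (inl d) (inr x) :=
        fun x hx => hdnc x ((hmem_take x).mpr (Or.inl hx))
      rcases hdp with hdi | ⟨e', he', hf'⟩
      · exact hc4 d hdc (Or.inl hdi) hdnc'
      · rcases (hmem_take e').mp he' with h1 | rfl
        · exact hc4 d hdc (Or.inr ⟨e', h1, hf'⟩) hdnc'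
        · -- e produced a j-condition, so e participates in j: contradiction
          exfalso
          obtain ⟨c'', hc''f, hc''c⟩ := N.post_pre_comp e d hf'
          exact h ((N.participates_iff e j).mpr ⟨c'', hc''f, by rw [hc''c, hdc]⟩)

lemma invAll (hnd : L.Nodup)
    (hpw : L.Pairwise (fun a b => ¬ Relation.TransGen N.F (inr b) (inr a)))
    (hL : ∀ x, x ∈ L ↔ x ∈ bpPast N.F e₂) : ∀ k, InvP N L k := by
  intro k
  induction k with
  | zero => exact invZero N L
  | succ k ih =>
    by_cases hk : k < L.length
    · exact inv_succ N e₂ L hnd hpw hL hk ih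
    · intro j
      have hcurr : curr N L (k+1) j = curr N L k j := by
        rw [curr_succ, dif_neg hk]
      have htake : L.take (k+1) = L.take k := by
        rw [List.take_of_length_le (le_of_not_gt hk),
            List.take_of_length_le (Nat.le_of_lt (Nat.lt_succ_of_le (le_of_not_gt hk)))]
      rw [hcurr, htake]
      exact ih j

lemma curr_eq_Mi (e' : E) {k : ℕ}
    (htake : ∀ x, x ∈ L.take k ↔ x ∈ bpPast N.F e') (hInv : InvP N L k) (j : ι) :
    curr N L k j = N.Mi e' j := by
  have hmem := N.Mi_mem e' j
  obtain ⟨h1, h2⟩ := hmem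
  refine ((hInv j).2.2.2 (N.Mi e' j) (N.Mi_comp e' j) ?_ ?_).symm
  · rcases h1 with hi | ⟨x, hx, hf⟩
    · exact Or.inl hi
    · exact Or.inr ⟨x, (htake x).mpr hx, hf⟩
  · exact fun x hx => h2 x ((htake x).mp hx)

lemma step_lemma (hnd : L.Nodup)
    (hpw : L.Pairwise (fun a b => ¬ Relation.TransGen N.F (inr b) (inr a)))
    (hL : ∀ x, x ∈ L ↔ x ∈ bpPast N.F e₂)
    {k : ℕ} (hk : k < L.length) :
    parStep alph A (fun j => N.stc (curr N L k j)) (N.act (L.get ⟨k, hk⟩))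
      (fun j => N.stc (curr N L (k+1) j)) := by
  have hInv := invAll N e₂ L hnd hpw hL k
  intro j
  constructor
  · intro h
    have hpre : preC N (L.get ⟨k, hk⟩) j h = curr N L k j :=
      key_pre N e₂ L hnd hpw hL hk hInv j h
    have hcurr : curr N L (k+1) j = postC N (L.get ⟨k, hk⟩) j h := by
      rw [curr_succ, dif_pos hk, dif_pos h]
    have hstep := N.step_comp (L.get ⟨k, hk⟩) (preC N (L.get ⟨k, hk⟩) j h)
      (postC N (L.get ⟨k, hk⟩) j h) (preC_flow N _ j h) (postC_flow N _ j h)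
      (by rw [preC_comp, postC_comp])
    rw [preC_comp] at hstep
    simpa [hcurr, ← hpre] using hstep
  · intro h
    have hcurr : curr N L (k+1) j = curr N L k j := by
      rw [curr_succ, dif_pos hk, dif_neg (by simp only [List.get_eq_getElem] at h; simp [h])]
    simp [hcurr]

lemma rho_zero (j : ι) : N.stc (curr N L 0 j) = (A j).init := by
  rw [curr_zero, N.init_state _ (initC_init N j), initC_comp]

end Aux

/-- if two events `e₁ < e₂` of a branching process of `A`,
neither of them an interface event, have the same `i`-predecessor condition
`M(e₁)ᵢ = M(e₂)ᵢ` and reach the same global state `st(e₁) = st(e₂)`, then `A`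
is divergent: it has an infinite trace whose projection onto `Σᵢ` is finite. -/
theorem repeated_state_implies_divergent
    {ι C E α T : Type} [Finite ι] (alph : ι → α → Bool) (A : ι → LTS α T) (i : ι)
    (N : LBProc ι C E α T alph A)
    (e₁ e₂ : E) (hlt : Relation.TransGen N.F (inr e₁) (inr e₂))
    (hni₁ : alph i (N.act e₁) = false) (hni₂ : alph i (N.act e₂) = false)
    (hMi : N.Mi e₁ i = N.Mi e₂ i)
    (hst : ∀ j, N.stc (N.Mi e₁ j) = N.stc (N.Mi e₂ j)) :
    ∃ (ρ : ℕ → ι → T) (w : ℕ → α),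
      ρ 0 = (fun j => (A j).init) ∧
      (∀ k, parStep alph A (ρ k) (w k) (ρ (k + 1))) ∧
      {k | alph i (w k) = true}.Finite := by
  classical
  have htrans : Transitive (fun a b : E => Relation.TransGen N.F (inr a) (inr b)) :=
    fun a b c h1 h2 => h1.trans h2
  have hirr : ∀ a : E, ¬ Relation.TransGen N.F (inr a) (inr a) :=
    fun a => N.acyclic (inr a)
  have hsub : bpPast N.F e₁ ⊆ bpPast N.F e₂ :=
    fun x hx => Relation.ReflTransGen.trans hx hlt.to_reflTransGen
  obtain ⟨L₁, hnd₁, hmem₁, hpw₁⟩ :=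
    exists_topo _ htrans hirr (bpPast N.F e₁) (N.past_finite e₁)
  obtain ⟨L₂, hnd₂, hmem₂, hpw₂⟩ :=
    exists_topo _ htrans hirr (bpPast N.F e₂ \ bpPast N.F e₁)
      ((N.past_finite e₂).subset (Set.diff_subset))
  set n₁ := L₁.length with hn₁
  set m := L₂.length with hmdef
  set L := L₁ ++ L₂ with hLdef
  have hlen : L.length = n₁ + m := by simp [hLdef, hn₁, hmdef]
  have he₂n₁ : e₂ ∉ bpPast N.F e₁ := by
    intro h
    exact N.acyclic (inr e₂) (Relation.TransGen.trans_right h hlt)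
  have he₂L₂ : e₂ ∈ L₂ := (hmem₂ e₂).mpr ⟨Relation.ReflTransGen.refl, he₂n₁⟩
  have hm : 0 < m := List.length_pos_of_mem he₂L₂
  -- properties of L
  have hnd : L.Nodup := by
    rw [hLdef, List.nodup_append]
    refine ⟨hnd₁, hnd₂, fun x hx₁ y hx₂ hxy => ?_⟩
    exact ((hmem₂ y).mp hx₂).2 ((hmem₁ y).mp (hxy ▸ hx₁))
  have hLmem : ∀ x, x ∈ L ↔ x ∈ bpPast N.F e₂ := by
    intro x
    rw [hLdef, List.mem_append, hmem₁, hmem₂]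
    constructor
    · rintro (h | h)
      · exact hsub h
      · exact h.1
    · intro h
      by_cases h1 : x ∈ bpPast N.F e₁
      · exact Or.inl h1
      · exact Or.inr ⟨h, h1⟩
  have hpw : L.Pairwise (fun a b => ¬ Relation.TransGen N.F (inr b) (inr a)) := by
    rw [hLdef, List.pairwise_append]
    refine ⟨hpw₁, hpw₂, fun a ha b hb hba => ?_⟩
    have ha₁ : a ∈ bpPast N.F e₁ := (hmem₁ a).mp ha
    have hb₁ : b ∈ bpPast N.F e₂ \ bpPast N.F e₁ := (hmem₂ b).mp hb
    exact hb₁.2 (Relation.ReflTransGen.trans hba.to_reflTransGen ha₁)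
  have hInvAll := invAll N e₂ L hnd hpw hLmem
  -- take n₁ is L₁, take (n₁+m) is L
  have htake1 : ∀ x, x ∈ L.take n₁ ↔ x ∈ bpPast N.F e₁ := by
    intro x
    rw [hLdef, hn₁, List.take_left]
    exact hmem₁ x
  have htakeAll : ∀ x, x ∈ L.take (n₁ + m) ↔ x ∈ bpPast N.F e₂ := by
    intro x
    rw [← hlen, List.take_length]
    exact hLmem x
  -- σ n₁ and σ (n₁+m)
  have hσn₁ : ∀ j, N.stc (curr N L n₁ j) = N.stc (N.Mi e₁ j) := by
    intro j; rw [curr_eq_Mi N L e₁ htake1 (hInvAll n₁) j]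
  have hσN : ∀ j, N.stc (curr N L (n₁ + m) j) = N.stc (N.Mi e₂ j) := by
    intro j; rw [curr_eq_Mi N L e₂ htakeAll (hInvAll (n₁ + m)) j]
  have hloop : ∀ j, N.stc (curr N L (n₁ + m) j) = N.stc (curr N L n₁ j) := by
    intro j; rw [hσN j, hσn₁ j, hst j]
  -- current i-condition is constant from n₁ on, no i-events after n₁
  have hmain : ∀ q, n₁ + q ≤ L.length → curr N L (n₁ + q) i = N.Mi e₁ i := by
    intro q
    induction q with
    | zero => intro _; exact curr_eq_Mi N L e₁ htake1 (hInvAll n₁) i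
    | succ q ih =>
      intro hq
      have hk : n₁ + q < L.length := by omega
      have hcq := ih (by omega)
      have hfalse : ¬ alph i (N.act (L.get ⟨n₁ + q, hk⟩)) = true := by
        intro h
        have hpre := key_pre N e₂ L hnd hpw hLmem hk (hInvAll (n₁ + q)) i h
        have hflow := preC_flow N (L.get ⟨n₁ + q, hk⟩) i h
        rw [hpre, hcq, hMi] at hflow
        exact (N.Mi_mem e₂ i).2 _ ((hLmem _).mp (List.get_mem L ⟨_, hk⟩)) hflow
      have : n₁ + (q + 1) = (n₁ + q) + 1 := by ring
      rw [this, curr_succ, dif_pos hk, dif_neg hfalse]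
      exact hcq
  have hfalse_all : ∀ k (hk : k < L.length), n₁ ≤ k →
      alph i (N.act (L.get ⟨k, hk⟩)) = false := by
    intro k hk hnk
    have hcq : curr N L k i = N.Mi e₁ i := by
      have := hmain (k - n₁) (by omega)
      rwa [Nat.add_sub_cancel' hnk] at this
    by_contra hcon
    have h : alph i (N.act (L.get ⟨k, hk⟩)) = true := by
      cases hb : alph i (N.act (L.get ⟨k, hk⟩)) with
      | false => exact absurd hb hcon
      | true => rfl
    have hpre := key_pre N e₂ L hnd hpw hLmem hk (hInvAll k) i h
    have hflow := preC_flow N (L.get ⟨k, hk⟩) i h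
    rw [hpre, hcq, hMi] at hflow
    exact (N.Mi_mem e₂ i).2 _ ((hLmem _).mp (List.get_mem L ⟨_, hk⟩)) hflow
  -- the infinite run
  set pos : ℕ → ℕ := fun k => if k < n₁ then k else n₁ + (k - n₁) % m with hposdef
  have hpos : ∀ k, pos k < L.length := by
    intro k
    rw [hposdef]
    by_cases hk : k < n₁
    · simp only [if_pos hk]; omega
    · simp only [if_neg hk]
      have := Nat.mod_lt (k - n₁) hm
      omega
  have hposge : ∀ k, ¬ k < n₁ → n₁ ≤ pos k := by
    intro k hk
    rw [hposdef]; simp only [if_neg hk]; omega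
  have hP : ∀ k, (fun j => N.stc (curr N L (pos k + 1) j)) =
      (fun j => N.stc (curr N L (pos (k + 1)) j)) := by
    intro k
    by_cases hk : k < n₁
    · have h1 : pos k = k := by rw [hposdef]; simp [hk]
      by_cases hk1 : k + 1 < n₁
      · have : pos (k + 1) = k + 1 := by rw [hposdef]; simp [hk1]
        rw [h1, this]
      · have hkn : k + 1 = n₁ := by omega
        have hz : k + 1 - n₁ = 0 := by omega
        have : pos (k + 1) = n₁ := by
          rw [hposdef]; simp only [if_neg (by omega : ¬ k + 1 < n₁)]
          rw [hz, Nat.zero_mod]; omega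
        rw [h1, this, hkn]
    · have h1 : pos k = n₁ + (k - n₁) % m := by rw [hposdef]; simp [hk]
      have h2 : pos (k + 1) = n₁ + (k + 1 - n₁) % m := by
        rw [hposdef]; simp only [if_neg (by omega : ¬ k + 1 < n₁)]
      have hq : (k + 1 - n₁) = (k - n₁) + 1 := by omega
      set q := (k - n₁) % m with hqdef
      have hqm : q < m := Nat.mod_lt _ hm
      have hmod : (k + 1 - n₁) % m = (q + 1) % m := by
        rw [hq]
        exact (Nat.mod_add_mod (k - n₁) m 1).symm
      by_cases hq1 : q + 1 < m
      · have : (q + 1) % m = q + 1 := Nat.mod_eq_of_lt hq1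
        rw [h1, h2, hmod, this, Nat.add_assoc]
      · have hq1' : q + 1 = m := by omega
        have : (q + 1) % m = 0 := by rw [hq1']; exact Nat.mod_self m
        rw [h1, h2, hmod, this]
        funext j
        have : n₁ + q + 1 = n₁ + m := by omega
        rw [this, Nat.add_zero]
        exact hloop j
  refine ⟨fun k => fun j => N.stc (curr N L (pos k) j),
    fun k => N.act (L.get ⟨pos k, hpos k⟩), ?_, ?_, ?_⟩
  · have h0 : pos 0 = 0 := by
      rw [hposdef]
      by_cases h : 0 < n₁
      · simp [h]
      · simp only [if_neg h]
        have hz : (0 - n₁) % m = 0 := by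
          have : 0 - n₁ = 0 := by omega
          rw [this, Nat.zero_mod]
        omega
    funext j
    show N.stc (curr N L (pos 0) j) = (A j).init
    rw [h0]
    exact rho_zero N L j
  · intro k
    have := step_lemma N e₂ L hnd hpw hLmem (hpos k)
    rw [hP k] at this
    exact this
  · apply Set.Finite.subset (Set.finite_Iio n₁)
    intro k hk
    simp only [Set.mem_setOf_eq] at hk
    simp only [Set.mem_Iio]
    by_contra hkn
    have hge : n₁ ≤ pos k := hposge k (by omega)
    rw [hfalse_all (pos k) (hpos k) hge] at hk
    exact Bool.false_ne_true hk
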